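/- Let X and Y be n×n complex matrices and t ≥ 0. Define Y(s) = e^{sX} Y e^{-sX}, and G_j(t) = ∫_0^t ds₁ ∫_0^{s₁} ds₂ ⋯ ∫_0^{s_{j-1}} ds_j Y(s_j)⋯Y(s₂)Y(s₁) with G₀(t) = I. Then e^{t(X+Y)} = ∑_{j=0}^∞ G_j(t) e^{tX}, where the series converges absolutely in operator norm. -/

import Mathlib

open scoped Matrix.Norms.L2Operator

/-- The interaction-picture operator `Y(s) = e^{sX} Y e^{-sX}`. -/
noncomputable def dysonY {n : ℕ} (X Y : Matrix (Fin n) (Fin n) ℂ) (s : ℝ) :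
    Matrix (Fin n) (Fin n) ℂ :=
  NormedSpace.exp (s • X) * Y * NormedSpace.exp ((-s) • X)

/-- The `j`-th Dyson term
`G_j(t) = ∫_0^t ds₁ ∫_0^{s₁} ds₂ ⋯ ∫_0^{s_{j-1}} ds_j  Y(s_j)⋯Y(s₂)Y(s₁)`,
with `G_0(t) = 1`, given by the recursion `G_{j+1}(t) = ∫_0^t G_j(s) Y(s) ds`. -/
noncomputable def dysonG {n : ℕ} (X Y : Matrix (Fin n) (Fin n) ℂ) :
    ℕ → ℝ → Matrix (Fin n) (Fin n) ℂ
  | 0, _ => 1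
  | (j + 1), t => ∫ s in (0 : ℝ)..t, dysonG X Y j s * dysonY X Y s

open NormedSpace MeasureTheory intervalIntegral Finset

noncomputable instance instNAQ {n : ℕ} : NormedAlgebra ℚ (Matrix (Fin n) (Fin n) ℂ) :=
  { (inferInstance : Algebra ℚ (Matrix (Fin n) (Fin n) ℂ)) with
    norm_smul_le := fun q A => by
      rw [← algebraMap_smul ℂ q A, norm_smul]
      simp [← Rat.norm_cast_real, Real.norm_eq_abs] }

namespace DysonAux

variable {n : ℕ} (X Y : Matrix (Fin n) (Fin n) ℂ)

lemma contY : Continuous (dysonY X Y) := by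
  unfold dysonY
  exact ((exp_continuous.comp (continuous_id.smul continuous_const)).mul
    continuous_const).mul (exp_continuous.comp (continuous_neg.smul continuous_const))

lemma contG : ∀ j, Continuous (dysonG X Y j)
  | 0 => continuous_const
  | (j + 1) => by
    show Continuous fun t => ∫ s in (0:ℝ)..t, dysonG X Y j s * dysonY X Y s
    exact intervalIntegral.continuous_primitive
      (fun a b => ((contG j).mul (contY X Y)).intervalIntegrable a b) 0

lemma expDeriv (B : Matrix (Fin n) (Fin n) ℂ) (s : ℝ) :
    HasDerivAt (fun u : ℝ => exp (u • B)) (exp (s • B) * B) s := by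
  exact hasDerivAt_exp_smul_const B s

lemma expInv (s : ℝ) : exp ((-s) • X) * exp (s • X) = 1 := by
  rw [← exp_add_of_commute (((Commute.refl X).smul_left (-s)).smul_right s)]
  rw [← add_smul, neg_add_cancel, zero_smul, exp_zero]

lemma expComm (s : ℝ) : exp ((-s) • X) * X = X * exp ((-s) • X) :=
  (((Commute.refl X).smul_right (-s)).exp_right).symm.eq

/-- The interaction-picture evolution `A(s) = e^{s(X+Y)} e^{-sX}`. -/
noncomputable def A (s : ℝ) : Matrix (Fin n) (Fin n) ℂ :=
  exp (s • (X + Y)) * exp ((-s) • X)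

lemma contA : Continuous (A X Y) :=
  (exp_continuous.comp (continuous_id.smul continuous_const)).mul
    (exp_continuous.comp (continuous_neg.smul continuous_const))

lemma hA' (s : ℝ) :
    HasDerivAt (A X Y) (A X Y s * dysonY X Y s) s := by
  have h2 : HasDerivAt (fun u : ℝ => exp ((-u) • X)) (-(exp ((-s) • X) * X)) s := by
    have := (expDeriv X (-s)).scomp s (hasDerivAt_neg s)
    simpa [Function.comp_def, neg_smul] using this
  have h3 := (expDeriv (X + Y) s).mul h2
  convert h3 using 1
  · rfl
  · rfl
  · rfl
  · rfl
  unfold A dysonY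
  set E := exp (s • (X + Y))
  set F := exp ((-s) • X)
  set G := exp (s • X)
  have key : F * G = 1 := expInv X s
  have hc : F * X = X * F := expComm X s
  calc E * F * (G * Y * F) = E * ((F * G) * (Y * F)) := by noncomm_ring
    _ = E * (Y * F) := by rw [key, one_mul]
    _ = E * (X + Y) * F + E * -(X * F) := by noncomm_ring
    _ = E * (X + Y) * F + E * -(F * X) := by rw [hc]

lemma A_eq (u : ℝ) :
    A X Y u = 1 + ∫ s in (0:ℝ)..u, A X Y s * dysonY X Y s := by
  have h := integral_eq_sub_of_hasDerivAt (f := A X Y)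
    (fun s _ => hA' X Y s)
    (((contA X Y).mul (contY X Y)).intervalIntegrable 0 u)
  have hA0 : A X Y 0 = 1 := by
    unfold A
    simp [zero_smul, exp_zero]
  rw [h, hA0]
  noncomm_ring

/-- Partial sums of the Dyson series. -/
noncomputable def S (N : ℕ) (u : ℝ) : Matrix (Fin n) (Fin n) ℂ :=
  ∑ j ∈ Finset.range N, dysonG X Y j u

lemma contS (N : ℕ) : Continuous (S X Y N) :=
  continuous_finset_sum _ fun j _ => contG X Y j

lemma S_succ (N : ℕ) (u : ℝ) :
    S X Y (N + 1) u = 1 + ∫ s in (0:ℝ)..u, S X Y N s * dysonY X Y s := by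
  unfold S
  rw [Finset.sum_range_succ']
  have : ∀ j : ℕ, dysonG X Y (j + 1) u
      = ∫ s in (0:ℝ)..u, dysonG X Y j s * dysonY X Y s := fun j => rfl
  simp only [this]
  rw [← intervalIntegral.integral_finset_sum (f := fun j s => dysonG X Y j s * dysonY X Y s)
    (fun j _ => ((contG X Y j).mul (contY X Y)).intervalIntegrable 0 u)]
  simp only [dysonG, ← Finset.sum_mul]
  rw [add_comm]

/-- Key integral estimate. -/
lemma norm_int_bound {f : ℝ → Matrix (Fin n) (Fin n) ℂ} {K M t : ℝ} {j : ℕ}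
    (hf : Continuous f) (hM : 0 ≤ M) (hK : 0 ≤ K)
    (hfb : ∀ s ∈ Set.Icc (0:ℝ) t, ‖f s‖ ≤ K * (M ^ j * s ^ j / j.factorial))
    (hYb : ∀ s ∈ Set.Icc (0:ℝ) t, ‖dysonY X Y s‖ ≤ M)
    {u : ℝ} (hu : u ∈ Set.Icc (0:ℝ) t) :
    ‖∫ s in (0:ℝ)..u, f s * dysonY X Y s‖
      ≤ K * (M ^ (j + 1) * u ^ (j + 1) / (j + 1).factorial) := by
  obtain ⟨hu0, hut⟩ := hu
  have hg : Continuous fun s : ℝ => K * (M ^ j * s ^ j / j.factorial) * M := by fun_prop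
  have hb : ‖∫ s in (0:ℝ)..u, f s * dysonY X Y s‖
      ≤ |∫ s in (0:ℝ)..u, K * (M ^ j * s ^ j / j.factorial) * M| := by
    apply intervalIntegral.norm_integral_le_abs_of_norm_le
    · filter_upwards [ae_restrict_mem measurableSet_uIoc] with s hs
      rw [Set.uIoc_of_le hu0] at hs
      have hsI : s ∈ Set.Icc (0:ℝ) t := ⟨hs.1.le, hs.2.trans hut⟩
      calc ‖f s * dysonY X Y s‖ ≤ ‖f s‖ * ‖dysonY X Y s‖ := norm_mul_le _ _
        _ ≤ K * (M ^ j * s ^ j / j.factorial) * M := by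
            apply mul_le_mul (hfb s hsI) (hYb s hsI) (norm_nonneg _)
            have : (0:ℝ) ≤ s ^ j := pow_nonneg hs.1.le j
            positivity
    · exact hg.intervalIntegrable 0 u
  have hcalc : (∫ s in (0:ℝ)..u, K * (M ^ j * s ^ j / j.factorial) * M)
      = K * (M ^ (j + 1) * u ^ (j + 1) / (j + 1).factorial) := by
    have : ∀ s : ℝ, K * (M ^ j * s ^ j / j.factorial) * M
        = (K * M ^ (j + 1) / j.factorial) * s ^ j := fun s => by ring
    simp only [this, intervalIntegral.integral_const_mul, integral_pow]
    have hfj : (j.factorial : ℝ) ≠ 0 := Nat.cast_ne_zero.2 j.factorial_ne_zero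
    rw [Nat.factorial_succ]
    push_cast
    field_simp
    ring
  rw [hcalc] at hb
  refine hb.trans_eq (abs_of_nonneg ?_)
  have h1 : (0:ℝ) ≤ u ^ (j + 1) := pow_nonneg hu0 _
  positivity

lemma boundG {M t : ℝ} (hM : 0 ≤ M) (ht : 0 ≤ t)
    (hYb : ∀ s ∈ Set.Icc (0:ℝ) t, ‖dysonY X Y s‖ ≤ M) :
    ∀ j, ∀ u ∈ Set.Icc (0:ℝ) t, ‖dysonG X Y j u‖ ≤ M ^ j * u ^ j / j.factorial := by
  intro j
  induction j with
  | zero =>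
    intro u hu
    have hone : ‖(1 : Matrix (Fin n) (Fin n) ℂ)‖ ≤ 1 := by
      rw [Matrix.cstar_norm_def, map_one]
      exact ContinuousLinearMap.norm_id_le
    simpa [dysonG] using hone
  | succ j ih =>
    intro u hu
    have hb := norm_int_bound X Y (f := dysonG X Y j) (K := 1) (contG X Y j) hM zero_le_one
      (fun s hs => by simpa using ih s hs) hYb hu
    simpa [dysonG] using hb

lemma boundD {M t C : ℝ} (hM : 0 ≤ M) (ht : 0 ≤ t) (hC : 0 ≤ C)
    (hYb : ∀ s ∈ Set.Icc (0:ℝ) t, ‖dysonY X Y s‖ ≤ M)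
    (hAb : ∀ s ∈ Set.Icc (0:ℝ) t, ‖A X Y s‖ ≤ C) :
    ∀ N, ∀ u ∈ Set.Icc (0:ℝ) t,
      ‖A X Y u - S X Y N u‖ ≤ C * (M ^ N * u ^ N / N.factorial) := by
  intro N
  induction N with
  | zero =>
    intro u hu
    simpa [S] using hAb u hu
  | succ N ih =>
    intro u hu
    have hrec : A X Y u - S X Y (N + 1) u
        = ∫ s in (0:ℝ)..u, (A X Y s - S X Y N s) * dysonY X Y s := by
      rw [A_eq X Y u, S_succ X Y N u]
      simp only [sub_mul]
      rw [intervalIntegral.integral_sub (f := fun s => A X Y s * dysonY X Y s)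
      (g := fun s => S X Y N s * dysonY X Y s)
        (((contA X Y).mul (contY X Y)).intervalIntegrable 0 u)
        (((contS X Y N).mul (contY X Y)).intervalIntegrable 0 u)]
      noncomm_ring
    rw [hrec]
    exact norm_int_bound X Y ((contA X Y).sub (contS X Y N)) hM hC ih hYb hu

end DysonAux

/-- Dyson expansion: `e^{t(X+Y)} = ∑_j G_j(t) e^{tX}`, the series converging
absolutely in operator norm. -/
theorem dyson_expansion {n : ℕ} (X Y : Matrix (Fin n) (Fin n) ℂ) (t : ℝ) (ht : 0 ≤ t) :
    HasSum (fun j : ℕ => dysonG X Y j t * NormedSpace.exp (t • X))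
        (NormedSpace.exp (t • (X + Y))) ∧
      Summable (fun j : ℕ => ‖dysonG X Y j t * NormedSpace.exp (t • X)‖) := by
  classical
  obtain ⟨M₀, hM₀⟩ := (isCompact_Icc (a := (0:ℝ)) (b := t)).exists_bound_of_continuousOn
    (DysonAux.contY X Y).continuousOn
  set M : ℝ := max M₀ 0 with hMdef
  have hM : 0 ≤ M := le_max_right _ _
  have hYb : ∀ s ∈ Set.Icc (0:ℝ) t, ‖dysonY X Y s‖ ≤ M :=
    fun s hs => (hM₀ s hs).trans (le_max_left _ _)
  obtain ⟨C₀, hC₀⟩ := (isCompact_Icc (a := (0:ℝ)) (b := t)).exists_bound_of_continuousOn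
    (DysonAux.contA X Y).continuousOn
  set C : ℝ := max C₀ 0 with hCdef
  have hC : 0 ≤ C := le_max_right _ _
  have hAb : ∀ s ∈ Set.Icc (0:ℝ) t, ‖DysonAux.A X Y s‖ ≤ C :=
    fun s hs => (hC₀ s hs).trans (le_max_left _ _)
  have htI : t ∈ Set.Icc (0:ℝ) t := ⟨ht, le_rfl⟩
  have hGb := DysonAux.boundG X Y hM ht hYb
  set E : Matrix (Fin n) (Fin n) ℂ := NormedSpace.exp (t • X) with hE
  -- summability of norms
  have hle : ∀ j : ℕ, ‖dysonG X Y j t * E‖ ≤ (M * t) ^ j / j.factorial * ‖E‖ := by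
    intro j
    calc ‖dysonG X Y j t * E‖ ≤ ‖dysonG X Y j t‖ * ‖E‖ := norm_mul_le _ _
      _ ≤ (M * t) ^ j / j.factorial * ‖E‖ := by
          apply mul_le_mul_of_nonneg_right _ (norm_nonneg _)
          rw [mul_pow]
          exact hGb j t htI
  have hsummable : Summable fun j : ℕ => (M * t) ^ j / j.factorial * ‖E‖ :=
    (Real.summable_pow_div_factorial (M * t)).mul_right _
  have hnormsum : Summable fun j : ℕ => ‖dysonG X Y j t * E‖ :=
    Summable.of_nonneg_of_le (fun j => norm_nonneg _) hle hsummable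
  have hf : Summable fun j : ℕ => dysonG X Y j t * E := hnormsum.of_norm
  -- partial sums tend to A t
  have hStend : Filter.Tendsto (fun N => DysonAux.S X Y N t) Filter.atTop
      (nhds (DysonAux.A X Y t)) := by
    rw [tendsto_iff_norm_sub_tendsto_zero]
    have hbd := fun N => DysonAux.boundD X Y hM ht hC hYb hAb N t htI
    have hzero : Filter.Tendsto (fun N : ℕ => C * (M ^ N * t ^ N / N.factorial))
        Filter.atTop (nhds 0) := by
      have := (Real.summable_pow_div_factorial (M * t)).tendsto_atTop_zero
      have h2 := this.const_mul C
      simpa [mul_pow, mul_comm, mul_assoc, mul_left_comm] using h2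
    apply squeeze_zero (fun N => norm_nonneg _) _ hzero
    intro N
    rw [norm_sub_rev]
    exact hbd N
  have hmul : Filter.Tendsto (fun N => DysonAux.S X Y N t * E) Filter.atTop
      (nhds (DysonAux.A X Y t * E)) := hStend.mul tendsto_const_nhds
  have hpartial : (fun N : ℕ => ∑ j ∈ Finset.range N, dysonG X Y j t * E)
      = fun N => DysonAux.S X Y N t * E := by
    funext N
    rw [DysonAux.S, Finset.sum_mul]
  have hAE : DysonAux.A X Y t * E = NormedSpace.exp (t • (X + Y)) := by
    rw [DysonAux.A, hE, mul_assoc, DysonAux.expInv X t, mul_one]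
  have hsum : HasSum (fun j : ℕ => dysonG X Y j t * E)
      (NormedSpace.exp (t • (X + Y))) := by
    have h1 := hf.hasSum
    have h2 := h1.tendsto_sum_nat
    rw [hpartial] at h2
    rwa [← hAE, ← tendsto_nhds_unique h2 hmul]
  exact ⟨hsum, hnormsum⟩
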